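/- For every real exponent p with 1 < p < 2 and all real numbers a and b, |a + b|^p ≤ |a|^p + |b|^p + p |a| |b|^{p-1}. -/

import Mathlib

open Real

lemma sub_add_rpow (x y q : ℝ) (hx : 0 ≤ x) (hy : 0 ≤ y) (hq : 0 ≤ q) (hq1 : q ≤ 1) :
    (x + y) ^ q ≤ x ^ q + y ^ q := by
  lift x to NNReal using hx
  lift y to NNReal using hy
  have := NNReal.rpow_add_le_add_rpow x y hq hq1
  exact_mod_cast this

lemma key (p : ℝ) (hp1 : 1 < p) (hp2 : p < 2) (x y : ℝ) (hx : 0 ≤ x) (hy : 0 ≤ y) :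
    (x + y) ^ p ≤ x ^ p + y ^ p + p * x * y ^ (p - 1) := by
  set F : ℝ → ℝ := fun x => x ^ p + y ^ p + p * x * y ^ (p - 1) - (x + y) ^ p with hF
  have hderiv : ∀ t : ℝ, HasDerivAt F
      (p * t ^ (p - 1) + p * y ^ (p - 1) - 1 * p * (t + y) ^ (p - 1)) t := by
    intro t
    have h1 : HasDerivAt (fun t : ℝ => t ^ p) (p * t ^ (p - 1)) t :=
      Real.hasDerivAt_rpow_const (Or.inr hp1.le)
    have h2 : HasDerivAt (fun t : ℝ => t + y) 1 t := (hasDerivAt_id t).add_const y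
    have h3 : HasDerivAt (fun t : ℝ => (t + y) ^ p) (1 * p * (t + y) ^ (p - 1)) t :=
      h2.rpow_const (Or.inr hp1.le)
    have h4 : HasDerivAt (fun t : ℝ => p * t * y ^ (p - 1)) (p * y ^ (p - 1)) t := by
      simpa [mul_comm, mul_assoc] using
        ((hasDerivAt_id t).const_mul p).mul_const (y ^ (p - 1))
    exact ((h1.add_const (y ^ p)).add h4).sub h3
  have hmono : MonotoneOn F (Set.Ici 0) := by
    apply monotoneOn_of_deriv_nonneg (convex_Ici 0)
      (fun t _ => ((hderiv t).continuousAt.continuousWithinAt))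
      (fun t _ => (hderiv t).differentiableAt.differentiableWithinAt)
    intro t ht
    rw [(hderiv t).deriv]
    have ht' : 0 < t := by simpa using ht
    have hsub : (t + y) ^ (p - 1) ≤ t ^ (p - 1) + y ^ (p - 1) :=
      sub_add_rpow t y (p - 1) ht'.le hy (by linarith) (by linarith)
    have hp0 : 0 < p := by linarith
    nlinarith [hsub, hp0]
  have h0 : F 0 ≤ F x := by
    rcases eq_or_lt_of_le hx with rfl | hx'
    · exact le_refl _
    · exact hmono (Set.self_mem_Ici) (Set.mem_Ici.mpr hx) hx
  have hF0 : F 0 = 0 := by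
    simp [hF, Real.zero_rpow (by positivity : p ≠ 0)]
  rw [hF0] at h0
  simpa [hF] using h0

theorem stmt_1 (p : ℝ) (hp1 : 1 < p) (hp2 : p < 2) (a b : ℝ) :
    |a + b| ^ p ≤ |a| ^ p + |b| ^ p + p * |a| * |b| ^ (p - 1) := by
  calc |a + b| ^ p ≤ (|a| + |b|) ^ p :=
        Real.rpow_le_rpow (abs_nonneg _) (abs_add_le a b) (by linarith)
    _ ≤ |a| ^ p + |b| ^ p + p * |a| * |b| ^ (p - 1) :=
        key p hp1 hp2 |a| |b| (abs_nonneg a) (abs_nonneg b)
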